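/- Let d ≥ 1, let Ω ⊆ ℝ^d satisfy the d-Ahlfors condition, let δ ∈ (0,1), a₀ ∈ (0,1], C₁ > 0 and k ∈ ℕ, and let Δ be a countable collection of pairwise disjoint open subsets of Ω such that every R ∈ Δ has diam(R) ≤ C₁ δ^k and contains B(z_R, a₀ δ^k) ∩ Ω for some z_R ∈ Ω. Let t ∈ (δ^{k+1}, δ^k], let M > d+1, let l ∈ ℕ, let Q ∈ Δ, and let F ⊆ ℝ^d be a set with dist(Q, F) ≥ l t. Then there exist constants c_{l,1}, c_{l,2} ≥ 0, depending only on l, d, M, δ, a₀, C₁ and the d-Ahlfors constants of Ω, such that ∑_{R ∈ Δ, R ∩ F ≠ ∅} ⟨dist(Q, R ∩ F)/s⟩^{−M} ≤ c_{l,1} + c_{l,2} (s/t)^M for all s > 0; moreover, if l ≥ 1 one can take c_{l,1} = 0. -/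

import Mathlib

open MeasureTheory Metric Set
open scoped ENNReal NNReal

/-- The (extended) distance between two subsets of a pseudo-e-metric space, with the
convention that the distance to/from the empty set is `∞`. -/
noncomputable def setEDist {α : Type*} [PseudoEMetricSpace α] (A B : Set α) : ℝ≥0∞ :=
  ⨅ x ∈ A, EMetric.infEdist x B

set_option maxHeartbeats 1000000 in
/-- Summing the weights `⟨dist(Q, R ∩ F)/s⟩^{-M}` over all dyadic cubes `R` of step size `t`,
where `F` is a set at distance at least `l·t` from the fixed cube `Q`. Cubes with `R ∩ F = ∅`
do not contribute, since then `dist(Q, R ∩ F) = ∞` and the corresponding weight vanishes. -/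
theorem sum_offdiagonal_weights_far_set
    (d : ℕ) (hd : 1 ≤ d)
    (Ω : Set (EuclideanSpace ℝ (Fin d)))
    (c₁ c₂ : ℝ) (hc₁ : 0 < c₁) (hc₁₂ : c₁ ≤ c₂)
    (hAhlfors : ∀ x ∈ Ω, ∀ r : ℝ, 0 < r → r ≤ 1 →
      ENNReal.ofReal (c₁ * r ^ d) ≤ volume (Ω ∩ ball x r) ∧
        volume (Ω ∩ ball x r) ≤ ENNReal.ofReal (c₂ * r ^ d))
    (δ a₀ C₁ : ℝ) (hδ0 : 0 < δ) (hδ1 : δ < 1) (ha₀0 : 0 < a₀) (ha₀1 : a₀ ≤ 1) (hC₁ : 0 < C₁)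
    (M : ℝ) (hM : (d : ℝ) + 1 < M) (l : ℕ) :
    ∃ cl₁ cl₂ : ℝ, 0 ≤ cl₁ ∧ 0 ≤ cl₂ ∧ (1 ≤ l → cl₁ = 0) ∧
      ∀ (k : ℕ) (Δ : Set (Set (EuclideanSpace ℝ (Fin d)))),
      Δ.Countable →
      (∀ R ∈ Δ, IsOpen R ∧ R ⊆ Ω) →
      (Δ.Pairwise Disjoint) →
      (∀ R ∈ Δ, EMetric.diam R ≤ ENNReal.ofReal (C₁ * δ ^ k)) →
      (∀ R ∈ Δ, ∃ z ∈ Ω, ball z (a₀ * δ ^ k) ∩ Ω ⊆ R) →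
      ∀ t : ℝ, δ ^ (k + 1) < t → t ≤ δ ^ k →
      ∀ Q ∈ Δ, ∀ F : Set (EuclideanSpace ℝ (Fin d)),
        ENNReal.ofReal ((l : ℝ) * t) ≤ setEDist Q F →
        ∀ s : ℝ, 0 < s →
          ∑' R : Δ, (1 + setEDist Q ((R : Set (EuclideanSpace ℝ (Fin d))) ∩ F) /
              ENNReal.ofReal s) ^ (-M) ≤
            ENNReal.ofReal (cl₁ + cl₂ * (s / t) ^ M) := by
  classical
  have hM0 : (0:ℝ) < M := lt_of_le_of_lt (by positivity : (0:ℝ) ≤ (d:ℝ) + 1) hM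
  set κ : ℝ := (volume (ball (0 : EuclideanSpace ℝ (Fin d)) 1)).toReal with hκdef
  have hκ0 : 0 ≤ κ := ENNReal.toReal_nonneg
  set C : ℝ := C₁ / δ with hCdef
  have hC0 : 0 < C := div_pos hC₁ hδ0
  set A : ℝ := κ / (c₁ * a₀ ^ d) with hAdef
  have hA0 : 0 ≤ A := div_nonneg hκ0 (by positivity)
  have hZsum : Summable (fun j : ℕ => (j : ℝ) ^ ((d : ℝ) - M)) :=
    Real.summable_nat_rpow.2 (by linarith)
  set Z : ℝ := ∑' j : ℕ, (j : ℝ) ^ ((d : ℝ) - M) with hZdef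
  have hZ0 : 0 ≤ Z := tsum_nonneg fun j => Real.rpow_nonneg (Nat.cast_nonneg j) _
  set cl₁ : ℝ := if l = 0 then A * (1 + 2 * C) ^ d else 0 with hcl₁def
  set cl₂ : ℝ := A * (2 + 2 * C) ^ d * Z with hcl₂def
  have hcl₁0 : 0 ≤ cl₁ := by rw [hcl₁def]; split <;> positivity
  refine ⟨cl₁, cl₂, hcl₁0, by positivity, fun hl => by rw [hcl₁def, if_neg (by omega)], ?_⟩
  intro k Δ hcount hopen hdisj hdiam hball t ht1 ht2 Q hQ F hQF s hs
  haveI := hcount.to_subtype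
  have ht0 : 0 < t := lt_trans (pow_pos hδ0 (k + 1)) ht1
  have hδk1 : δ ^ k ≤ 1 := pow_le_one₀ hδ0.le hδ1.le
  have htle1 : t ≤ 1 := ht2.trans hδk1
  have hCk : C₁ * δ ^ k ≤ C * t := by
    have h1 : δ ^ k ≤ t / δ := by
      rw [le_div_iff₀ hδ0, ← pow_succ]; exact ht1.le
    calc C₁ * δ ^ k ≤ C₁ * (t / δ) := by nlinarith
    _ = C * t := by rw [hCdef]; ring
  -- a point of Q
  obtain ⟨zQ, hzQΩ, hzQsub⟩ := hball Q hQ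
  have hx₀Q : zQ ∈ Q := hzQsub ⟨mem_ball_self (by positivity), hzQΩ⟩
  -- notation
  set D : Δ → ℝ≥0∞ := fun R => setEDist Q ((R : Set (EuclideanSpace ℝ (Fin d))) ∩ F) with hDdef
  set w : Δ → ℝ≥0∞ := fun R => (1 + D R / ENNReal.ofReal s) ^ (-M) with hwdef
  have hDl : ∀ R : Δ, ENNReal.ofReal ((l : ℝ) * t) ≤ D R := by
    intro R
    refine hQF.trans ?_
    exact iInf₂_mono fun x _ => EMetric.infEdist_anti inter_subset_right
  have hwtop : ∀ R : Δ, D R = ⊤ → w R = 0 := by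
    intro R h
    simp only [hwdef]
    simp only [h, ENNReal.top_div, if_neg ENNReal.ofReal_ne_top, add_top]
    exact ENNReal.top_rpow_of_neg (by linarith)
  set m : Δ → ℕ := fun R => ⌊(D R).toReal / t⌋₊ with hmdef
  -- floor facts
  have hfloor_le : ∀ R : Δ, (m R : ℝ) * t ≤ (D R).toReal := by
    intro R
    have h1 : (m R : ℝ) ≤ (D R).toReal / t := Nat.floor_le (by positivity)
    rw [le_div_iff₀ ht0] at h1; exact h1
  have hfloor_lt : ∀ R : Δ, (D R).toReal < ((m R : ℝ) + 1) * t := by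
    intro R
    have h1 : (D R).toReal / t < (m R : ℝ) + 1 := Nat.lt_floor_add_one _
    rw [div_lt_iff₀ ht0] at h1; exact h1
  -- decomposition
  have hdecomp : ∑' R : Δ, w R
      = ∑' (j : ℕ) (R : Δ), (if m R = j ∧ D R ≠ ⊤ then w R else 0) := by
    rw [ENNReal.tsum_comm]
    refine tsum_congr fun R => ?_
    by_cases h : D R = ⊤
    · simp [h, hwtop R h]
    · rw [tsum_eq_single (m R) ?_]
      · rw [if_pos ⟨rfl, h⟩]
      · intro j hj
        rw [if_neg]
        rintro ⟨h1, -⟩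
        exact hj h1.symm
  -- the real-valued dominating sequence
  set W : ℕ → ℝ := fun j =>
    if j = 0 then cl₁ else A * (2 + 2 * C) ^ d * ((s / t) ^ M * (j : ℝ) ^ ((d : ℝ) - M))
    with hWdef
  have hWnn : ∀ j, 0 ≤ W j := by
    intro j
    simp only [hWdef]
    split
    · exact hcl₁0
    · have := Real.rpow_nonneg (Nat.cast_nonneg j) ((d : ℝ) - M)
      have h2 : (0:ℝ) ≤ (s / t) ^ M := Real.rpow_nonneg (by positivity) _
      positivity
  -- key bound for each j
  have key : ∀ j : ℕ, (∑' R : Δ, (if m R = j ∧ D R ≠ ⊤ then w R else 0))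
      ≤ ENNReal.ofReal (W j) := by
    intro j
    by_cases hjl : j < l
    · have hzero : ∀ R : Δ, (if m R = j ∧ D R ≠ ⊤ then w R else 0) = 0 := by
        intro R
        rw [if_neg]
        rintro ⟨hmj, htop⟩
        have h1 : (l : ℝ) * t ≤ (D R).toReal :=
          (ENNReal.ofReal_le_iff_le_toReal htop).1 (hDl R)
        have h2 : (D R).toReal < ((j : ℝ) + 1) * t := by
          have := hfloor_lt R; rwa [hmj] at this
        have h3 : (l : ℝ) < (j : ℝ) + 1 := by nlinarith
        have h4 : (l : ℝ) < (j + 1 : ℕ) := by push_cast; linarith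
        exact absurd (Nat.cast_lt.1 h4) (by omega)
      simp only [hzero, tsum_zero]
      exact zero_le
    -- main case : j ≥ l
    push_neg at hjl
    set ρ : ℝ := ((j : ℝ) + 1 + 2 * C) * t with hρdef
    have hρ0 : 0 < ρ := by positivity
    -- every cube in the j-th class is contained in the closed ball of radius ρ around zQ
    have hRsub : ∀ R : Δ, m R = j → D R ≠ ⊤ →
        (R : Set (EuclideanSpace ℝ (Fin d))) ⊆ closedBall zQ ρ := by
      intro R hmj htop y' hy'
      have h2 : (D R).toReal < ((j : ℝ) + 1) * t := by
        have := hfloor_lt R; rwa [hmj] at this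
      have hDlt : D R < ENNReal.ofReal (((j : ℝ) + 1) * t) :=
        (ENNReal.lt_ofReal_iff_toReal_lt htop).2 h2
      obtain ⟨x, hxQ, hx⟩ :
          ∃ x ∈ Q, EMetric.infEdist x ((R : Set (EuclideanSpace ℝ (Fin d))) ∩ F)
            < ENNReal.ofReal (((j : ℝ) + 1) * t) := by
        have h3 := hDlt
        rw [hDdef] at h3
        simp only [setEDist, iInf_lt_iff] at h3
        obtain ⟨x, hx1, hx2⟩ := h3
        exact ⟨x, hx1, hx2⟩
      obtain ⟨y, hyRF, hxy⟩ := EMetric.infEdist_lt_iff.1 hx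
      have e1 : edist y' y ≤ ENNReal.ofReal (C * t) :=
        ((EMetric.edist_le_diam_of_mem hy' hyRF.1).trans (hdiam R R.2)).trans
          (ENNReal.ofReal_le_ofReal hCk)
      have e2 : edist x zQ ≤ ENNReal.ofReal (C * t) :=
        ((EMetric.edist_le_diam_of_mem hxQ hx₀Q).trans (hdiam Q hQ)).trans
          (ENNReal.ofReal_le_ofReal hCk)
      have e3 : edist y x ≤ ENNReal.ofReal (((j : ℝ) + 1) * t) := by
        rw [edist_comm]; exact hxy.le
      have hfin : edist y' zQ ≤ ENNReal.ofReal ρ := by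
        calc edist y' zQ ≤ edist y' y + edist y x + edist x zQ := edist_triangle4 _ _ _ _
        _ ≤ ENNReal.ofReal (C * t) + ENNReal.ofReal (((j : ℝ) + 1) * t)
            + ENNReal.ofReal (C * t) := add_le_add (add_le_add e1 e3) e2
        _ = ENNReal.ofReal ρ := by
            rw [← ENNReal.ofReal_add (by positivity) (by positivity),
              ← ENNReal.ofReal_add (by positivity) (by positivity)]
            congr 1
            rw [hρdef]; ring
      exact (edist_le_ofReal hρ0.le).1 hfin
    -- measure lower bound for each cube in the class
    have hvol : ∀ R : Δ, m R = j → D R ≠ ⊤ →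
        ENNReal.ofReal (c₁ * (a₀ * t) ^ d)
          ≤ volume ((R : Set (EuclideanSpace ℝ (Fin d))) ∩ closedBall zQ ρ) := by
      intro R hmj htop
      obtain ⟨z, hzΩ, hzsub⟩ := hball (R : Set (EuclideanSpace ℝ (Fin d))) R.2
      have hatk : a₀ * t ≤ a₀ * δ ^ k := mul_le_mul_of_nonneg_left ht2 ha₀0.le
      have hat1 : a₀ * t ≤ 1 := by
        have h := mul_le_mul ha₀1 htle1 ht0.le zero_le_one
        simpa using h
      have hsub2 : Ω ∩ ball z (a₀ * t)
          ⊆ (R : Set (EuclideanSpace ℝ (Fin d))) ∩ closedBall zQ ρ := by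
        intro y hy
        have hyR : y ∈ (R : Set (EuclideanSpace ℝ (Fin d))) :=
          hzsub ⟨ball_subset_ball hatk hy.2, hy.1⟩
        exact ⟨hyR, hRsub R hmj htop hyR⟩
      have h1 := (hAhlfors z hzΩ (a₀ * t) (by positivity) hat1).1
      exact h1.trans (measure_mono hsub2)
    -- weight upper bound
    have hwB : ∀ R : Δ, m R = j → D R ≠ ⊤ →
        w R ≤ ENNReal.ofReal ((1 + (j : ℝ) * t / s) ^ (-M)) := by
      intro R hmj htop
      have h1 : (j : ℝ) * t ≤ (D R).toReal := by
        have := hfloor_le R; rwa [hmj] at this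
      have h2 : ENNReal.ofReal ((j : ℝ) * t) ≤ D R :=
        (ENNReal.ofReal_le_iff_le_toReal htop).2 h1
      have h3 : ENNReal.ofReal (1 + (j : ℝ) * t / s) ≤ 1 + D R / ENNReal.ofReal s := by
        rw [ENNReal.ofReal_add (by norm_num) (by positivity), ENNReal.ofReal_one,
          ENNReal.ofReal_div_of_pos hs]
        exact add_le_add_right (ENNReal.div_le_div_right h2 _) 1
      calc w R = (1 + D R / ENNReal.ofReal s) ^ (-M) := rfl
      _ ≤ (ENNReal.ofReal (1 + (j : ℝ) * t / s)) ^ (-M) := by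
          rw [ENNReal.rpow_neg, ENNReal.rpow_neg]
          exact ENNReal.inv_le_inv.2 (ENNReal.rpow_le_rpow h3 hM0.le)
      _ = ENNReal.ofReal ((1 + (j : ℝ) * t / s) ^ (-M)) :=
          ENNReal.ofReal_rpow_of_pos (by positivity)
    -- the disjoint measurable family
    set AR : Δ → Set (EuclideanSpace ℝ (Fin d)) := fun R =>
      if m R = j ∧ D R ≠ ⊤
      then (R : Set (EuclideanSpace ℝ (Fin d))) ∩ closedBall zQ ρ else ∅ with hARdef
    have hARmeas : ∀ R : Δ, MeasurableSet (AR R) := by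
      intro R
      simp only [hARdef]
      split
      · exact ((hopen _ R.2).1.measurableSet).inter measurableSet_closedBall
      · exact MeasurableSet.empty
    have hARdisj : Pairwise (Function.onFun Disjoint AR) := by
      intro R S hne
      simp only [Function.onFun, hARdef]
      split
      · split
        · exact Disjoint.mono inter_subset_left inter_subset_left
            (hdisj R.2 S.2 (Subtype.coe_injective.ne hne))
        · exact disjoint_bot_right
      · exact disjoint_bot_left
    have hARsub : ∀ R : Δ, AR R ⊆ closedBall zQ ρ := by
      intro R
      simp only [hARdef]
      split
      · exact inter_subset_right
      · exact empty_subset _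
    set v : ℝ≥0∞ := ENNReal.ofReal (c₁ * (a₀ * t) ^ d) with hvdef
    have hv0 : v ≠ 0 := by
      rw [hvdef]
      simp only [ne_eq, ENNReal.ofReal_eq_zero, not_le]
      positivity
    have hvtop : v ≠ ⊤ := ENNReal.ofReal_ne_top
    set Bj : ℝ≥0∞ := ENNReal.ofReal ((1 + (j : ℝ) * t / s) ^ (-M)) with hBjdef
    have step1 : (∑' R : Δ, (if m R = j ∧ D R ≠ ⊤ then w R else 0))
        ≤ ∑' R : Δ, Bj / v * volume (AR R) := by
      refine ENNReal.tsum_le_tsum fun R => ?_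
      by_cases hc : m R = j ∧ D R ≠ ⊤
      · rw [if_pos hc, hARdef]
        simp only [if_pos hc]
        calc w R ≤ Bj := hwB R hc.1 hc.2
        _ = Bj / v * v := (ENNReal.div_mul_cancel hv0 hvtop).symm
        _ ≤ Bj / v * volume ((R : Set (EuclideanSpace ℝ (Fin d))) ∩ closedBall zQ ρ) :=
            mul_le_mul_right (hvol R hc.1 hc.2) _
      · simp [if_neg hc, hARdef]
    have step2 : ∑' R : Δ, Bj / v * volume (AR R) = Bj / v * volume (⋃ R : Δ, AR R) := by
      rw [ENNReal.tsum_mul_left, measure_iUnion hARdisj hARmeas]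
    have hκ' : volume (closedBall zQ ρ) = ENNReal.ofReal (ρ ^ d * κ) := by
      rw [Measure.addHaar_closedBall volume zQ hρ0.le, finrank_euclideanSpace_fin,
        ENNReal.ofReal_mul (by positivity), hκdef,
        ENNReal.ofReal_toReal measure_ball_lt_top.ne]
    have step3 : Bj / v * volume (⋃ R : Δ, AR R) ≤ Bj / v * ENNReal.ofReal (ρ ^ d * κ) := by
      rw [← hκ']
      exact mul_le_mul_right (measure_mono (iUnion_subset hARsub)) _
    have step4 : Bj / v * ENNReal.ofReal (ρ ^ d * κ)
        = ENNReal.ofReal ((1 + (j : ℝ) * t / s) ^ (-M) * (ρ ^ d * κ) / (c₁ * (a₀ * t) ^ d)) := by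
      rw [ENNReal.ofReal_div_of_pos (by positivity),
        ENNReal.ofReal_mul (Real.rpow_nonneg (by positivity) _), ← hBjdef, ← hvdef,
        div_eq_mul_inv, div_eq_mul_inv, mul_right_comm]
    -- the real inequality
    have hreal : (1 + (j : ℝ) * t / s) ^ (-M) * (ρ ^ d * κ) / (c₁ * (a₀ * t) ^ d) ≤ W j := by
      rcases Nat.eq_zero_or_pos j with hj0 | hj1
      · -- j = 0, hence l = 0
        have hl0 : l = 0 := by omega
        subst hj0
        simp only [hWdef, if_pos rfl, hcl₁def, if_pos hl0]
        have hb0 : (1 + (0 : ℕ) * t / s : ℝ) ^ (-M) = 1 := by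
          norm_num
        rw [hb0, one_mul, hρdef, hAdef]
        have ht' : t ≠ 0 := ne_of_gt ht0
        have hc' : c₁ ≠ 0 := ne_of_gt hc₁
        have ha' : a₀ ≠ 0 := ne_of_gt ha₀0
        rw [show (((0:ℕ) : ℝ) + 1 + 2 * C) * t = (1 + 2 * C) * t by push_cast; ring,
          mul_pow, mul_pow]
        refine le_of_eq ?_
        rw [div_mul_eq_mul_div, div_eq_div_iff (by positivity) (by positivity)]
        ring
      · -- j ≥ 1
        have hj1' : (1 : ℝ) ≤ (j : ℝ) := by exact_mod_cast hj1
        have hjpos : (0 : ℝ) < (j : ℝ) := by linarith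
        have hb : (1 + (j : ℝ) * t / s) ^ (-M) ≤ ((j : ℝ) * t / s) ^ (-M) :=
          Real.rpow_le_rpow_of_nonpos (by positivity) (by linarith) (by linarith)
        have heq : ((j : ℝ) * t / s) ^ (-M) = (j : ℝ) ^ (-M) * (s / t) ^ M := by
          rw [show (j : ℝ) * t / s = (j : ℝ) * (t / s) by ring,
            Real.mul_rpow (Nat.cast_nonneg j) (by positivity)]
          congr 1
          rw [Real.rpow_neg (by positivity), ← Real.inv_rpow (by positivity), inv_div]
        have hρle : ρ ≤ (2 + 2 * C) * (j : ℝ) * t := by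
          rw [hρdef]
          have : (j : ℝ) + 1 + 2 * C ≤ (2 + 2 * C) * (j : ℝ) := by nlinarith
          nlinarith
        have hmain : (1 + (j : ℝ) * t / s) ^ (-M) * (ρ ^ d * κ) / (c₁ * (a₀ * t) ^ d)
            ≤ ((j : ℝ) ^ (-M) * (s / t) ^ M) * (((2 + 2 * C) * (j : ℝ) * t) ^ d * κ)
              / (c₁ * (a₀ * t) ^ d) := by
          rw [← heq]
          gcongr
        refine hmain.trans (le_of_eq ?_)
        simp only [hWdef]
        rw [if_neg (by omega)]
        have hjdM : (j : ℝ) ^ ((d : ℝ) - M) = (j : ℝ) ^ d * (j : ℝ) ^ (-M) := by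
          rw [show (d : ℝ) - M = (d : ℝ) + (-M) by ring, Real.rpow_add hjpos,
            Real.rpow_natCast]
        rw [hjdM, hAdef]
        have ht' : t ≠ 0 := ne_of_gt ht0
        have hc' : c₁ ≠ 0 := ne_of_gt hc₁
        have ha' : a₀ ≠ 0 := ne_of_gt ha₀0
        rw [mul_pow, mul_pow, mul_pow]
        rw [div_mul_eq_mul_div, div_mul_eq_mul_div,
          div_eq_div_iff (by positivity) (by positivity)]
        ring
    calc (∑' R : Δ, (if m R = j ∧ D R ≠ ⊤ then w R else 0))
        ≤ ∑' R : Δ, Bj / v * volume (AR R) := step1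
    _ = Bj / v * volume (⋃ R : Δ, AR R) := step2
    _ ≤ Bj / v * ENNReal.ofReal (ρ ^ d * κ) := step3
    _ = ENNReal.ofReal ((1 + (j : ℝ) * t / s) ^ (-M) * (ρ ^ d * κ) / (c₁ * (a₀ * t) ^ d)) :=
        step4
    _ ≤ ENNReal.ofReal (W j) := ENNReal.ofReal_le_ofReal hreal
  -- summing the dominating sequence
  set f : ℕ → ℝ := fun j => (A * (2 + 2 * C) ^ d * (s / t) ^ M) * (j : ℝ) ^ ((d : ℝ) - M)
    with hfdef
  set e : ℕ → ℝ := fun j => if j = 0 then cl₁ else 0 with hedef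
  have hfsum : Summable f := hZsum.mul_left _
  have hesum : Summable e := by
    refine summable_of_ne_finset_zero (s := {0}) fun b hb => ?_
    simp only [Finset.mem_singleton] at hb
    simp only [hedef]
    rw [if_neg hb]
  have hWeq : W = fun j => e j + f j := by
    funext j
    simp only [hWdef, hedef, hfdef]
    rcases eq_or_ne j 0 with h | h
    · subst h
      rw [if_pos rfl, if_pos rfl]
      have : ((0 : ℕ) : ℝ) ^ ((d : ℝ) - M) = 0 := by
        rw [Nat.cast_zero, Real.zero_rpow (by linarith)]
      rw [this]
      ring
    · rw [if_neg h, if_neg h]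
      ring
  have hWsum : Summable W := by rw [hWeq]; exact hesum.add hfsum
  have htsumW : ∑' j, W j = cl₁ + cl₂ * (s / t) ^ M := by
    rw [hWeq, Summable.tsum_add hesum hfsum]
    have h1 : ∑' j, e j = cl₁ := by
      rw [tsum_eq_single 0 fun j hj => by simp [hedef, hj]]
      simp [hedef]
    have h2 : ∑' j, f j = (A * (2 + 2 * C) ^ d * (s / t) ^ M) * Z := by
      simp only [hfdef]
      rw [tsum_mul_left]
    rw [h1, h2, hcl₂def]
    ring
  calc ∑' R : Δ, (1 + setEDist Q ((R : Set (EuclideanSpace ℝ (Fin d))) ∩ F) /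
          ENNReal.ofReal s) ^ (-M)
      = ∑' (j : ℕ) (R : Δ), (if m R = j ∧ D R ≠ ⊤ then w R else 0) := hdecomp
  _ ≤ ∑' (j : ℕ), ENNReal.ofReal (W j) := ENNReal.tsum_le_tsum key
  _ = ENNReal.ofReal (∑' j, W j) := (ENNReal.ofReal_tsum_of_nonneg hWnn hWsum).symm
  _ = ENNReal.ofReal (cl₁ + cl₂ * (s / t) ^ M) := by rw [htsumW]
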